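/- Assume the Lagrangian L and the constraint functions α_ν do not depend on t nor on the coordinates q_{m+1},…,q_n: L = L(q₁,…,qₘ, u) and α_ν = α_ν(q₁,…,qₘ, v). Then along every C² curve satisfying the constraints and solving the Voronec equations, the energy E* satisfies d/dt[E*(q(t),v(t))] = ∑_{ν=1}^k d/dt[(ᾱ_ν − α_ν)(q(t),v(t))]·(∂L/∂u_{m+ν})(q(t), û(q(t),v(t))). -/

import Mathlib

open scoped BigOperators
noncomputable section
namespace NH

/-- The phase point `(q, v, t)` with `q : ℝⁿ` (n = m+k) and independent velocities `v : ℝᵐ`. -/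
abbrev Pt (m k : ℕ) : Type := (Fin (m+k) → ℝ) × (Fin m → ℝ) × ℝ

/-- The full phase point `(q, u, t)` with all velocities `u : ℝⁿ`. -/
abbrev PtL (m k : ℕ) : Type := (Fin (m+k) → ℝ) × (Fin (m+k) → ℝ) × ℝ

/-- Partial derivative of `f (q, w, t)` with respect to `q_i`. -/
def pq {n m' : ℕ} (f : (Fin n → ℝ) × (Fin m' → ℝ) × ℝ → ℝ) (i : Fin n)
    (x : (Fin n → ℝ) × (Fin m' → ℝ) × ℝ) : ℝ :=
  fderiv ℝ f x (Pi.single i 1, 0, 0)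

/-- Partial derivative of `f (q, w, t)` with respect to the velocity variable `w_j`. -/
def pv {n m' : ℕ} (f : (Fin n → ℝ) × (Fin m' → ℝ) × ℝ → ℝ) (j : Fin m')
    (x : (Fin n → ℝ) × (Fin m' → ℝ) × ℝ) : ℝ :=
  fderiv ℝ f x (0, Pi.single j 1, 0)

/-- Partial derivative of `f (q, w, t)` with respect to time `t`. -/
def pt {n m' : ℕ} (f : (Fin n → ℝ) × (Fin m' → ℝ) × ℝ → ℝ)
    (x : (Fin n → ℝ) × (Fin m' → ℝ) × ℝ) : ℝ :=
  fderiv ℝ f x (0, 0, 1)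

/-- Partial derivative of `U (q, t)` with respect to `q_i`. -/
def pUq {n : ℕ} (U : (Fin n → ℝ) × ℝ → ℝ) (i : Fin n) (x : (Fin n → ℝ) × ℝ) : ℝ :=
  fderiv ℝ U x (Pi.single i 1, 0)

/-- Partial derivative of `U (q, t)` with respect to `t`. -/
def pUt {n : ℕ} (U : (Fin n → ℝ) × ℝ → ℝ) (x : (Fin n → ℝ) × ℝ) : ℝ :=
  fderiv ℝ U x (0, 1)

variable {m k : ℕ}

/-- `û(q,v,t) = (v₁,…,vₘ, α₁(q,v,t),…,α_k(q,v,t))`. -/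
def uhat (α : Fin k → Pt m k → ℝ) (x : Pt m k) : Fin (m+k) → ℝ :=
  Fin.append x.2.1 (fun ν => α ν x)

/-- The full phase point `(q, û(q,v,t), t)` associated to `(q,v,t)`. -/
def Lpt (α : Fin k → Pt m k → ℝ) (x : Pt m k) : PtL m k :=
  (x.1, uhat α x, x.2.2)

/-- The restricted Lagrangian `L*(q,v,t) = L(q, û(q,v,t), t)`. -/
def Lstar (L : PtL m k → ℝ) (α : Fin k → Pt m k → ℝ) (x : Pt m k) : ℝ :=
  L (Lpt α x)

/-- `ᾱ_ν(q,v,t) = ∑_r v_r ∂α_ν/∂v_r`. -/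
def abar (α : Fin k → Pt m k → ℝ) (ν : Fin k) (x : Pt m k) : ℝ :=
  ∑ r : Fin m, x.2.1 r * pv (α ν) r x

/-- The restricted energy `E*(q,v,t) = ∑_r v_r ∂L*/∂v_r − L*`. -/
def Estar (L : PtL m k → ℝ) (α : Fin k → Pt m k → ℝ) (x : Pt m k) : ℝ :=
  ∑ r : Fin m, x.2.1 r * pv (Lstar L α) r x - Lstar L α x

/-- The energy `E(q,v,t) = ∑_i û_i (∂L/∂u_i)(q,û,t) − L*(q,v,t)`. -/
def En (L : PtL m k → ℝ) (α : Fin k → Pt m k → ℝ) (x : Pt m k) : ℝ :=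
  ∑ i : Fin (m+k), uhat α x i * pv L i (Lpt α x) - Lstar L α x

/-- `q̇_i(t)`. -/
def qdot {n : ℕ} (q : ℝ → Fin n → ℝ) (t : ℝ) (i : Fin n) : ℝ :=
  deriv (fun s => q s i) t

/-- The independent velocities `v(t) = (q̇₁,…,q̇ₘ)` along a curve. -/
def vel (m k : ℕ) (q : ℝ → Fin (m+k) → ℝ) (t : ℝ) (r : Fin m) : ℝ :=
  qdot q t (Fin.castAdd k r)

/-- The point `(q(t), v(t), t)` along a curve. -/
def along (m k : ℕ) (q : ℝ → Fin (m+k) → ℝ) (t : ℝ) : Pt m k :=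
  (q t, vel m k q t, t)

/-- The curve satisfies the nonholonomic constraints: `q̇_{m+ν} = α_ν(q, v, t)`. -/
def Constrained (α : Fin k → Pt m k → ℝ) (q : ℝ → Fin (m+k) → ℝ) : Prop :=
  ∀ (t : ℝ) (ν : Fin k), qdot q t (Fin.natAdd m ν) = α ν (along m k q t)

/-- The Voronec coefficients `B_rν(t)` along a constrained curve. -/
def Bco (α : Fin k → Pt m k → ℝ) (q : ℝ → Fin (m+k) → ℝ) (r : Fin m) (ν : Fin k) (t : ℝ) : ℝ :=
  deriv (fun s => pv (α ν) r (along m k q s)) t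
    - pq (α ν) (Fin.castAdd k r) (along m k q t)
    - ∑ μ : Fin k, pv (α μ) r (along m k q t) * pq (α ν) (Fin.natAdd m μ) (along m k q t)

/-- The Voronec equations of motion along a constrained curve. -/
def Voronec (L : PtL m k → ℝ) (α : Fin k → Pt m k → ℝ) (q : ℝ → Fin (m+k) → ℝ) : Prop :=
  ∀ (r : Fin m) (t : ℝ),
    deriv (fun s => pv (Lstar L α) r (along m k q s)) t
      - pq (Lstar L α) (Fin.castAdd k r) (along m k q t)
      - ∑ ν : Fin k, pq (Lstar L α) (Fin.natAdd m ν) (along m k q t) * pv (α ν) r (along m k q t)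
      - ∑ ν : Fin k, Bco α q r ν t * pv L (Fin.natAdd m ν) (Lpt α (along m k q t)) = 0


lemma hasDerivAt_line {E : Type*} [NormedAddCommGroup E] [NormedSpace ℝ E]
    (f : E → ℝ) (x w : E) (hf : DifferentiableAt ℝ f x) :
    HasDerivAt (fun s : ℝ => f (x + s • w)) (fderiv ℝ f x w) 0 := by
  have h1 : HasDerivAt (fun s : ℝ => x + s • w) w 0 := by
    have := ((hasDerivAt_id (0:ℝ)).smul_const w).const_add x
    simpa using this
  have h2 : HasFDerivAt f (fderiv ℝ f x) (x + (0:ℝ) • w) := by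
    simpa using hf.hasFDerivAt
  simpa [Function.comp_def] using h2.comp_hasDerivAt 0 h1

lemma fderiv_dir_zero {E : Type*} [NormedAddCommGroup E] [NormedSpace ℝ E]
    (f : E → ℝ) (x w : E) (hf : DifferentiableAt ℝ f x)
    (h : ∀ s : ℝ, f (x + s • w) = f x) : fderiv ℝ f x w = 0 := by
  have h1 := hasDerivAt_line f x w hf
  have h2 : HasDerivAt (fun s : ℝ => f (x + s • w)) 0 0 := by
    simp_rw [h]; exact hasDerivAt_const _ _
  exact h1.unique h2

lemma clm_expand {n m' : ℕ} (φ : ((Fin n → ℝ) × (Fin m' → ℝ) × ℝ) →L[ℝ] ℝ)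
    (a : Fin n → ℝ) (b : Fin m' → ℝ) (c : ℝ) :
    φ (a, b, c) = ∑ i, a i * φ (Pi.single i 1, 0, 0)
      + ∑ r, b r * φ (0, Pi.single r 1, 0) + c * φ (0, 0, 1) := by
  have ha : (a, b, c) = (∑ i : Fin n, a i • ((Pi.single i 1 : Fin n → ℝ), (0 : Fin m' → ℝ), (0:ℝ)))
      + (∑ r : Fin m', b r • ((0 : Fin n → ℝ), (Pi.single r 1 : Fin m' → ℝ), (0:ℝ)))
      + c • ((0 : Fin n → ℝ), (0 : Fin m' → ℝ), (1:ℝ)) := by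
    refine Prod.ext ?_ (Prod.ext ?_ ?_)
    · simp [Prod.fst_sum, ← Pi.single_smul, smul_eq_mul, Finset.univ_sum_single]
    · simp [Prod.snd_sum, Prod.fst_sum, ← Pi.single_smul, smul_eq_mul, Finset.univ_sum_single]
    · simp [Prod.snd_sum]
  rw [ha, map_add, map_add, map_sum, map_sum, map_smul]
  simp only [map_smul, smul_eq_mul]


variable {m k : ℕ}

lemma castAdd_ne_natAdd (r : Fin m) (ν : Fin k) : Fin.castAdd k r ≠ Fin.natAdd m ν := by
  simp only [Fin.ne_iff_vne, Fin.coe_castAdd, Fin.coe_natAdd]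
  omega

lemma pq_indep {f : Pt m k → ℝ} (hf : Differentiable ℝ f)
    (hind : ∀ (y y' : Fin (m+k) → ℝ) (v : Fin m → ℝ) (t t' : ℝ),
      (∀ r : Fin m, y (Fin.castAdd k r) = y' (Fin.castAdd k r)) → f (y, v, t) = f (y', v, t'))
    (μ : Fin k) (x : Pt m k) : pq f (Fin.natAdd m μ) x = 0 := by
  have e : Fin (m+k) → ℝ := Pi.single (Fin.natAdd m μ) 1
  apply fderiv_dir_zero f x (((Pi.single (Fin.natAdd m μ) 1 : Fin (m+k) → ℝ)), (0 : Fin m → ℝ), (0:ℝ)) (hf x)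
  intro s
  have hx : x + s • (((Pi.single (Fin.natAdd m μ) 1 : Fin (m+k) → ℝ)), (0 : Fin m → ℝ), (0:ℝ))
      = (x.1 + s • (Pi.single (Fin.natAdd m μ) 1 : Fin (m+k) → ℝ), x.2.1, x.2.2) := by
    refine Prod.ext ?_ (Prod.ext ?_ ?_) <;> simp [Prod.smul_fst, Prod.smul_snd]
  rw [hx]
  have hx2 : f x = f (x.1, x.2.1, x.2.2) := rfl
  rw [hx2]
  apply hind
  intro r
  simp [Pi.single_eq_of_ne (castAdd_ne_natAdd r μ)]

lemma pt_indep {f : Pt m k → ℝ} (hf : Differentiable ℝ f)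
    (hind : ∀ (y y' : Fin (m+k) → ℝ) (v : Fin m → ℝ) (t t' : ℝ),
      (∀ r : Fin m, y (Fin.castAdd k r) = y' (Fin.castAdd k r)) → f (y, v, t) = f (y', v, t'))
    (x : Pt m k) : pt f x = 0 := by
  apply fderiv_dir_zero f x ((0 : Fin (m+k) → ℝ), (0 : Fin m → ℝ), (1:ℝ)) (hf x)
  intro s
  have hx : x + s • ((0 : Fin (m+k) → ℝ), (0 : Fin m → ℝ), (1:ℝ))
      = (x.1, x.2.1, x.2.2 + s) := by
    refine Prod.ext ?_ (Prod.ext ?_ ?_) <;> simp [Prod.smul_fst, Prod.smul_snd]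
  rw [hx]
  have hx2 : f x = f (x.1, x.2.1, x.2.2) := rfl
  rw [hx2]
  exact hind _ _ _ _ _ (fun r => rfl)

lemma Lstar_indep (L : PtL m k → ℝ) (α : Fin k → Pt m k → ℝ)
    (hLind : ∀ (x x' : Fin (m+k) → ℝ) (u : Fin (m+k) → ℝ) (t t' : ℝ),
      (∀ r : Fin m, x (Fin.castAdd k r) = x' (Fin.castAdd k r)) → L (x, u, t) = L (x', u, t'))
    (hαind : ∀ (ν : Fin k) (x x' : Fin (m+k) → ℝ) (v : Fin m → ℝ) (t t' : ℝ),
      (∀ r : Fin m, x (Fin.castAdd k r) = x' (Fin.castAdd k r)) → α ν (x, v, t) = α ν (x', v, t')) :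
    ∀ (y y' : Fin (m+k) → ℝ) (v : Fin m → ℝ) (t t' : ℝ),
      (∀ r : Fin m, y (Fin.castAdd k r) = y' (Fin.castAdd k r)) →
        Lstar L α (y, v, t) = Lstar L α (y', v, t') := by
  intro y y' v t t' h
  simp only [Lstar, Lpt, uhat]
  have hu : (fun ν : Fin k => α ν (y, v, t)) = (fun ν => α ν (y', v, t')) :=
    funext fun ν => hαind ν y y' v t t' h
  rw [hu]
  exact hLind y y' _ t t' h

lemma uhat_contDiff {α : Fin k → Pt m k → ℝ} (hα : ∀ ν, ContDiff ℝ 2 (α ν)) :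
    ContDiff ℝ 2 (uhat α) := by
  rw [contDiff_pi]
  intro i
  induction i using Fin.addCases with
  | left r =>
      have h : (fun x : Pt m k => uhat α x (Fin.castAdd k r)) = fun x => x.2.1 r := by
        funext x; simp [uhat, Fin.append_left]
      rw [h]
      exact contDiff_pi.mp (contDiff_fst.comp contDiff_snd) r
  | right ν =>
      have h : (fun x : Pt m k => uhat α x (Fin.natAdd m ν)) = fun x => α ν x := by
        funext x; simp [uhat, Fin.append_right]
      rw [h]
      exact hα ν

lemma Lstar_contDiff {L : PtL m k → ℝ} {α : Fin k → Pt m k → ℝ}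
    (hL : ContDiff ℝ 2 L) (hα : ∀ ν, ContDiff ℝ 2 (α ν)) :
    ContDiff ℝ 2 (Lstar L α) := by
  apply hL.comp
  exact ContDiff.prodMk contDiff_fst (ContDiff.prodMk (uhat_contDiff hα) (ContDiff.comp contDiff_snd contDiff_snd))

lemma pv_contDiff {f : Pt m k → ℝ} (hf : ContDiff ℝ 2 f) (r : Fin m) :
    ContDiff ℝ 1 (fun x => pv f r x) := by
  have h1 : ContDiff ℝ 1 (fderiv ℝ f) := hf.fderiv_right (by norm_num)
  exact h1.clm_apply contDiff_const

lemma vel_contDiff (q : ℝ → Fin (m+k) → ℝ) (hq : ContDiff ℝ 2 q) (r : Fin m) :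
    ContDiff ℝ 1 (fun s => vel m k q s r) := by
  have h2 : ContDiff ℝ (1+1 : ℕ) (fun s => q s (Fin.castAdd k r)) := by
    exact_mod_cast contDiff_pi.mp hq _
  exact (contDiff_succ_iff_deriv.mp (by exact_mod_cast h2)).2.2

lemma hasDerivAt_along (q : ℝ → Fin (m+k) → ℝ) (hq : ContDiff ℝ 2 q) (t : ℝ) :
    HasDerivAt (fun s => along m k q s)
      (qdot q t, (fun r => deriv (fun s => vel m k q s r) t), 1) t := by
  have h1 : HasDerivAt (fun s => q s) (qdot q t) t :=
    hasDerivAt_pi.mpr fun i => (((contDiff_pi.mp hq i).differentiable (by norm_num)) t).hasDerivAt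
  have h2 : HasDerivAt (fun s => vel m k q s) (fun r => deriv (fun s => vel m k q s r) t) t :=
    hasDerivAt_pi.mpr fun r => (((vel_contDiff q hq r).differentiable one_ne_zero) t).hasDerivAt
  exact h1.prodMk (h2.prodMk (hasDerivAt_id t))


lemma hasDerivAt_comp_along (q : ℝ → Fin (m+k) → ℝ) (hq : ContDiff ℝ 2 q)
    (f : Pt m k → ℝ) (t : ℝ) (hf : DifferentiableAt ℝ f (along m k q t)) :
    HasDerivAt (fun s => f (along m k q s))
      (∑ i, qdot q t i * pq f i (along m k q t)
        + ∑ r, deriv (fun s => vel m k q s r) t * pv f r (along m k q t)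
        + pt f (along m k q t)) t := by
  have h := hf.hasFDerivAt.comp_hasDerivAt t (hasDerivAt_along q hq t)
  have he := clm_expand (fderiv ℝ f (along m k q t)) (qdot q t)
      (fun r => deriv (fun s => vel m k q s r) t) 1
  rw [he] at h
  simpa [pq, pv, pt, Function.comp_def] using h

lemma hasDerivAt_comp_along' (q : ℝ → Fin (m+k) → ℝ) (hq : ContDiff ℝ 2 q)
    (f : Pt m k → ℝ) (hf : Differentiable ℝ f)
    (hind : ∀ (y y' : Fin (m+k) → ℝ) (v : Fin m → ℝ) (t t' : ℝ),
      (∀ r : Fin m, y (Fin.castAdd k r) = y' (Fin.castAdd k r)) → f (y, v, t) = f (y', v, t'))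
    (t : ℝ) :
    HasDerivAt (fun s => f (along m k q s))
      (∑ r : Fin m, vel m k q t r * pq f (Fin.castAdd k r) (along m k q t)
        + ∑ r : Fin m, deriv (fun s => vel m k q s r) t * pv f r (along m k q t)) t := by
  have h := hasDerivAt_comp_along q hq f t (hf _)
  have h0 : ∀ ν : Fin k, pq f (Fin.natAdd m ν) (along m k q t) = 0 :=
    fun ν => pq_indep hf hind ν _
  have ht0 : pt f (along m k q t) = 0 := pt_indep hf hind _
  rw [Fin.sum_univ_add] at h
  simp only [h0, ht0, mul_zero, Finset.sum_const_zero, add_zero] at h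
  have hv : ∀ r : Fin m, qdot q t (Fin.castAdd k r) = vel m k q t r := fun r => rfl
  simpa [hv] using h

theorem chaplygin_energy_balance (m k : ℕ) (hm : 0 < m) (hk : 0 < k)
    (L : PtL m k → ℝ) (hL : ContDiff ℝ 2 L)
    (α : Fin k → Pt m k → ℝ) (hα : ∀ ν, ContDiff ℝ 2 (α ν))
    (hLind : ∀ (x x' : Fin (m+k) → ℝ) (u : Fin (m+k) → ℝ) (t t' : ℝ),
      (∀ r : Fin m, x (Fin.castAdd k r) = x' (Fin.castAdd k r)) → L (x, u, t) = L (x', u, t'))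
    (hαind : ∀ (ν : Fin k) (x x' : Fin (m+k) → ℝ) (v : Fin m → ℝ) (t t' : ℝ),
      (∀ r : Fin m, x (Fin.castAdd k r) = x' (Fin.castAdd k r)) → α ν (x, v, t) = α ν (x', v, t'))
    (q : ℝ → Fin (m+k) → ℝ) (hq : ContDiff ℝ 2 q)
    (hcon : Constrained α q)
    (hV : Voronec L α q) :
    ∀ t : ℝ,
      deriv (fun s => Estar L α (along m k q s)) t
        = ∑ ν : Fin k,
            deriv (fun s => abar α ν (along m k q s) - α ν (along m k q s)) t
              * pv L (Fin.natAdd m ν) (Lpt α (along m k q t)) := by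
  intro t
  have hLs2 : ContDiff ℝ 2 (Lstar L α) := Lstar_contDiff hL hα
  have hLsd : Differentiable ℝ (Lstar L α) := hLs2.differentiable (by norm_num)
  have hLsind := Lstar_indep L α hLind hαind
  have hAlong : DifferentiableAt ℝ (fun s => along m k q s) t :=
    (hasDerivAt_along q hq t).differentiableAt
  set x := along m k q t with hxdef
  set Vd : Fin m → ℝ := fun r => deriv (fun s => vel m k q s r) t with hVddef
  have hdpv : ∀ (f : Pt m k → ℝ), ContDiff ℝ 2 f → ∀ r : Fin m,
      HasDerivAt (fun s => pv f r (along m k q s)) (deriv (fun s => pv f r (along m k q s)) t) t := by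
    intro f hf r
    have hd : DifferentiableAt ℝ (fun s => pv f r (along m k q s)) t :=
      (((pv_contDiff hf r).differentiable one_ne_zero) (along m k q t)).comp t hAlong
    exact hd.hasDerivAt
  have hdv : ∀ r : Fin m, HasDerivAt (fun s => vel m k q s r) (Vd r) t :=
    fun r => (((vel_contDiff q hq r).differentiable one_ne_zero) t).hasDerivAt
  have hsum : HasDerivAt (fun s => ∑ r : Fin m, vel m k q s r * pv (Lstar L α) r (along m k q s))
      (∑ r : Fin m, (Vd r * pv (Lstar L α) r x
        + vel m k q t r * deriv (fun s => pv (Lstar L α) r (along m k q s)) t)) t :=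
    HasDerivAt.fun_sum fun r _ => (hdv r).mul (hdpv _ hLs2 r)
  have hLsd' := hasDerivAt_comp_along' q hq (Lstar L α) hLsd hLsind t
  have hEd := hsum.fun_sub hLsd'
  have hfeE : (fun s => Estar L α (along m k q s))
      = fun s => (∑ r : Fin m, vel m k q s r * pv (Lstar L α) r (along m k q s))
          - Lstar L α (along m k q s) := rfl
  have hpq0 : ∀ ν : Fin k, pq (Lstar L α) (Fin.natAdd m ν) x = 0 :=
    fun ν => pq_indep hLsd hLsind ν x
  have hDL : ∀ r : Fin m, deriv (fun s => pv (Lstar L α) r (along m k q s)) t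
      = pq (Lstar L α) (Fin.castAdd k r) x
        + ∑ ν : Fin k, Bco α q r ν t * pv L (Fin.natAdd m ν) (Lpt α x) := by
    intro r
    have h := hV r t
    rw [← hxdef] at h
    simp only [hpq0, zero_mul, Finset.sum_const_zero, sub_zero] at h
    linarith
  have hRHS : ∀ ν : Fin k, deriv (fun s => abar α ν (along m k q s) - α ν (along m k q s)) t
      = ∑ r : Fin m, vel m k q t r * Bco α q r ν t := by
    intro ν
    have hαd : Differentiable ℝ (α ν) := (hα ν).differentiable (by norm_num)
    have hsum2 : HasDerivAt (fun s => ∑ r : Fin m, vel m k q s r * pv (α ν) r (along m k q s))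
        (∑ r : Fin m, (Vd r * pv (α ν) r x
          + vel m k q t r * deriv (fun s => pv (α ν) r (along m k q s)) t)) t :=
      HasDerivAt.fun_sum fun r _ => (hdv r).mul (hdpv _ (hα ν) r)
    have h2 := hsum2.fun_sub (hasDerivAt_comp_along' q hq (α ν) hαd (hαind ν) t)
    have hfe : (fun s => abar α ν (along m k q s) - α ν (along m k q s))
        = fun s => (∑ r : Fin m, vel m k q s r * pv (α ν) r (along m k q s))
            - α ν (along m k q s) := rfl
    rw [hfe, h2.deriv]
    have h0 : ∀ μ : Fin k, pq (α ν) (Fin.natAdd m μ) x = 0 :=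
      fun μ => pq_indep hαd (hαind ν) μ x
    have hB : ∀ r : Fin m, Bco α q r ν t
        = deriv (fun s => pv (α ν) r (along m k q s)) t - pq (α ν) (Fin.castAdd k r) x := by
      intro r
      rw [Bco, ← hxdef]
      simp [h0]
    simp only [hB]
    simp only [mul_sub, mul_add, Finset.sum_add_distrib, Finset.sum_sub_distrib]
    ring
  rw [hfeE, hEd.deriv]
  simp only [hDL, hRHS]
  simp only [mul_add, Finset.sum_add_distrib, Finset.mul_sum, Finset.sum_mul, mul_assoc]
  have hc : (∑ r : Fin m, ∑ ν : Fin k,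
        vel m k q t r * (Bco α q r ν t * pv L (Fin.natAdd m ν) (Lpt α x)))
      = ∑ ν : Fin k, ∑ r : Fin m,
        vel m k q t r * (Bco α q r ν t * pv L (Fin.natAdd m ν) (Lpt α x)) := Finset.sum_comm
  rw [hc]
  ring

end NH
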